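/- arXiv:2604.21905 — 3 statements merged into one kernel-verified Lean document; each statement's English description precedes it below -/
import Mathlib

section
/- For full-column-rank X ∈ ℝ^{m×r} and Y ∈ ℝ^{n×r}, the ScaledGD Riemannian metric g_{(X,Y)}((ξ_X, ξ_Y), (φ_X, φ_Y)) := ⟨ξ_X (YᵀY), φ_X⟩_F + ⟨ξ_Y (XᵀX), φ_Y⟩_F is gauge-invariant: for any invertible Q ∈ ℝ^{r×r}, with X̃ = XQ, Ỹ = YQ^{−T}, and tangent vectors pushed forward by ξ̃_X = ξ_X Q, ξ̃_Y = ξ_Y Q^{−T} (similarly for φ), one has g_{(X̃,Ỹ)}((ξ̃_X, ξ̃_Y), (φ̃_X, φ̃_Y)) = g_{(X,Y)}((ξ_X, ξ_Y), (φ_X, φ_Y)). -/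
open Matrix

lemma aux_trace {p q r : ℕ} (A B : Matrix (Fin p) (Fin r) ℝ)
    (C : Matrix (Fin q) (Fin r) ℝ) (P S : Matrix (Fin r) (Fin r) ℝ)
    (h : P * Sᵀ = 1) (h' : S * Pᵀ = 1) :
    ((A * P * ((C * S)ᵀ * (C * S)))ᵀ * (B * P)).trace
      = ((A * (Cᵀ * C))ᵀ * B).trace := by
  have e1 : A * P * ((C * S)ᵀ * (C * S)) = A * (Cᵀ * C) * S := by
    simp only [transpose_mul, ← Matrix.mul_assoc]
    rw [Matrix.mul_assoc A P Sᵀ, h, Matrix.mul_one]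
  rw [e1, transpose_mul, Matrix.mul_assoc, Matrix.trace_mul_comm]
  simp only [Matrix.mul_assoc]
  rw [h, Matrix.mul_one]

/-- Gauge invariance of the ScaledGD Riemannian metric
`g((ξ_X,ξ_Y),(φ_X,φ_Y)) = ⟨ξ_X(YᵀY), φ_X⟩_F + ⟨ξ_Y(XᵀX), φ_Y⟩_F`
under `X̃ = XQ`, `Ỹ = YQ^{−T}`, with tangent vectors pushed forward accordingly. -/
theorem scaledgd_metric_gauge_invariant (m n r : ℕ)
    (X : Matrix (Fin m) (Fin r) ℝ) (Y : Matrix (Fin n) (Fin r) ℝ)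
    (hX : X.rank = r) (hY : Y.rank = r)
    (Q : Matrix (Fin r) (Fin r) ℝ) (hQ : IsUnit Q.det)
    (ξX φX : Matrix (Fin m) (Fin r) ℝ) (ξY φY : Matrix (Fin n) (Fin r) ℝ) :
    ((ξX * Q * ((Y * Q⁻¹ᵀ)ᵀ * (Y * Q⁻¹ᵀ)))ᵀ * (φX * Q)).trace
      + ((ξY * Q⁻¹ᵀ * ((X * Q)ᵀ * (X * Q)))ᵀ * (φY * Q⁻¹ᵀ)).trace
    = ((ξX * (Yᵀ * Y))ᵀ * φX).trace + ((ξY * (Xᵀ * X))ᵀ * φY).trace := by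
  have h1 : Q * Q⁻¹ = 1 := mul_nonsing_inv Q hQ
  have h2 : Q⁻¹ * Q = 1 := nonsing_inv_mul Q hQ
  rw [aux_trace ξX φX Y Q Q⁻¹ᵀ (by simpa using h1)
        (by rw [← transpose_mul, h1, transpose_one]),
      aux_trace ξY φY X Q⁻¹ᵀ Q
        (by rw [← transpose_mul, h1, transpose_one]) (by simpa using h1)]
end

section
/- Under the gauge transformation X̃ = XQ, Ỹ = YQ^{−T} with Q ∈ GL(r), the RefLoRA geometric-mean matrix transforms as S̃ = Q^{−1} S Q^{−T}, where S̃ = P̃_X^{−1/2}(P̃_X^{1/2} P̃_Y P̃_X^{1/2})^{1/2} P̃_X^{−1/2} with P̃_X = X̃ᵀX̃, P̃_Y = ỸᵀỸ, and S is defined analogously from P_X = XᵀX, P_Y = YᵀY. -/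
open Matrix

lemma posDef_of_posSemidef_isUnit {r : ℕ} {A : Matrix (Fin r) (Fin r) ℝ}
    (h : A.PosSemidef) (hu : IsUnit A) : A.PosDef := by
  exact h.posDef_iff_isUnit.mpr hu

open scoped MatrixOrder in
lemma spd_solution_unique {r : ℕ} {A S T : Matrix (Fin r) (Fin r) ℝ}
    (hA : A.PosDef) (hS : S.PosDef) (hT : T.PosDef) (h : S * A * S = T * A * T) : S = T := by
  have hAs := hA.posSemidef
  set B := CFC.sqrt A with hBdef
  have hB : B.PosSemidef := (CFC.sqrt_nonneg A).posSemidef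
  have hBB : B * B = A := CFC.sqrt_mul_sqrt_self A hAs.nonneg
  have hBH : Bᴴ = B := hB.1
  have hBSB : (B * S * B).PosSemidef := by
    have := hS.posSemidef.mul_mul_conjTranspose_same B
    rwa [hBH] at this
  have hBTB : (B * T * B).PosSemidef := by
    have := hT.posSemidef.mul_mul_conjTranspose_same B
    rwa [hBH] at this
  have hsq : (B * S * B) ^ 2 = (B * T * B) ^ 2 := by
    have e1 : (B * S * B) ^ 2 = B * (S * A * S) * B := by rw [← hBB]; noncomm_ring
    have e2 : (B * T * B) ^ 2 = B * (T * A * T) * B := by rw [← hBB]; noncomm_ring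
    rw [e1, e2, h]
  have heq : B * S * B = B * T * B := by
    rw [← CFC.sqrt_sq _ hBSB.nonneg, hsq, CFC.sqrt_sq _ hBTB.nonneg]
  have hBu : IsUnit B.det := by
    have hd : B.det * B.det = A.det := by rw [← det_mul, hBB]
    exact isUnit_of_mul_isUnit_left (hd ▸ hA.det_pos.ne'.isUnit)
  have hc : ∀ M : Matrix (Fin r) (Fin r) ℝ, B⁻¹ * (B * M * B) * B⁻¹ = M := by
    intro M
    have e : B⁻¹ * (B * M * B) * B⁻¹ = (B⁻¹ * B) * M * (B * B⁻¹) := by noncomm_ring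
    rw [e, Matrix.nonsing_inv_mul _ hBu, Matrix.mul_nonsing_inv _ hBu, one_mul, mul_one]
  calc S = B⁻¹ * (B * S * B) * B⁻¹ := (hc S).symm
    _ = B⁻¹ * (B * T * B) * B⁻¹ := by rw [heq]
    _ = T := hc T

/-- Under the gauge transformation `X̃ = XQ`, `Ỹ = YQ^{−T}`, the RefLoRA
geometric-mean matrix (characterized as the unique SPD solution of `S P_X S = P_Y`)
transforms as `S̃ = Q⁻¹ S Q^{−T}`. -/
theorem reflora_S_gauge_transform (m n r : ℕ)
    (X : Matrix (Fin m) (Fin r) ℝ) (Y : Matrix (Fin n) (Fin r) ℝ)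
    (hX : X.rank = r) (hY : Y.rank = r)
    (Q : Matrix (Fin r) (Fin r) ℝ) (hQ : IsUnit Q.det)
    (S : Matrix (Fin r) (Fin r) ℝ) (hS : S.PosDef)
    (hSeq : S * (Xᵀ * X) * S = Yᵀ * Y)
    (St : Matrix (Fin r) (Fin r) ℝ) (hSt : St.PosDef)
    (hSteq : St * ((X * Q)ᵀ * (X * Q)) * St = (Y * Q⁻¹ᵀ)ᵀ * (Y * Q⁻¹ᵀ)) :
    St = Q⁻¹ * S * Q⁻¹ᵀ := by
  have hApsd : (Xᵀ * X).PosSemidef := by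
    have := posSemidef_conjTranspose_mul_self X
    rwa [conjTranspose_eq_transpose_of_trivial] at this
  have hArank : (Xᵀ * X).rank = r := by
    have := rank_conjTranspose_mul_self X
    rwa [conjTranspose_eq_transpose_of_trivial, hX] at this
  have hAunit : IsUnit (Xᵀ * X) := by
    rw [← Matrix.mulVec_injective_iff_isUnit]
    have hsurj : Function.Surjective (Xᵀ * X).mulVecLin := by
      rw [← LinearMap.range_eq_top]
      apply Submodule.eq_top_of_finrank_eq
      simpa [Matrix.rank] using hArank
    exact LinearMap.injective_iff_surjective.mpr hsurj
  have hApd : (Xᵀ * X).PosDef := posDef_of_posSemidef_isUnit hApsd hAunit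
  have hQu : IsUnit Q := (Matrix.isUnit_iff_isUnit_det Q).mpr hQ
  have hQt : IsUnit Qᵀ := (Matrix.isUnit_iff_isUnit_det _).mpr (by rwa [det_transpose])
  have hS'psd : (Q * St * Qᵀ).PosSemidef := by
    have := hSt.posSemidef.mul_mul_conjTranspose_same Q
    rwa [conjTranspose_eq_transpose_of_trivial] at this
  have hS'u : IsUnit (Q * St * Qᵀ) := (hQu.mul hSt.isUnit).mul hQt
  have hS'pd : (Q * St * Qᵀ).PosDef := posDef_of_posSemidef_isUnit hS'psd hS'u
  have hkey : (Q * St * Qᵀ) * (Xᵀ * X) * (Q * St * Qᵀ) = Yᵀ * Y := by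
    have h1 : St * (Qᵀ * (Xᵀ * X) * Q) * St = Q⁻¹ * (Yᵀ * Y) * Q⁻¹ᵀ := by
      have h2 := hSteq
      rw [transpose_mul, transpose_mul, transpose_transpose] at h2
      calc St * (Qᵀ * (Xᵀ * X) * Q) * St
          = St * (Qᵀ * Xᵀ * (X * Q)) * St := by simp only [Matrix.mul_assoc]
        _ = Q⁻¹ᵀᵀ * Yᵀ * (Y * Q⁻¹ᵀ) := h2
        _ = Q⁻¹ * (Yᵀ * Y) * Q⁻¹ᵀ := by rw [transpose_transpose]; simp only [Matrix.mul_assoc]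
    calc (Q * St * Qᵀ) * (Xᵀ * X) * (Q * St * Qᵀ)
        = Q * (St * (Qᵀ * (Xᵀ * X) * Q) * St) * Qᵀ := by noncomm_ring
      _ = Q * (Q⁻¹ * (Yᵀ * Y) * Q⁻¹ᵀ) * Qᵀ := by rw [h1]
      _ = (Q * Q⁻¹) * (Yᵀ * Y) * (Q⁻¹ᵀ * Qᵀ) := by noncomm_ring
      _ = Yᵀ * Y := by
          rw [← transpose_mul, Matrix.mul_nonsing_inv _ hQ]
          simp
  have hST : S = Q * St * Qᵀ := spd_solution_unique hApd hS hS'pd (hSeq.trans hkey.symm)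
  have hfin : Q⁻¹ * (Q * St * Qᵀ) * Q⁻¹ᵀ = St := by
    calc Q⁻¹ * (Q * St * Qᵀ) * Q⁻¹ᵀ
        = (Q⁻¹ * Q) * St * (Qᵀ * Q⁻¹ᵀ) := by noncomm_ring
      _ = St := by
          rw [← transpose_mul, Matrix.nonsing_inv_mul _ hQ]
          simp
  rw [hST, hfin]
end

section
/- Let F(X,Y) = f(XYᵀ) for differentiable f : ℝ^{m×n} → ℝ, and let G_W = ∇f(XYᵀ), so that ∇_X F = G_W Y and ∇_Y F = G_Wᵀ X. For any symmetric positive definite S ∈ ℝ^{r×r}, the update directions ΔX = −η G_W Y S^{−1} and ΔY = −η G_Wᵀ X S are orthogonal to the vertical space: for every U ∈ ℝ^{r×r}, ⟨XU·S, ΔX⟩_F + ⟨−YUᵀ·S^{−1}, ΔY⟩_F = 0. -/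
open Matrix

/-- The RefLoRA update directions `ΔX = −η G_W Y S⁻¹`, `ΔY = −η G_Wᵀ X S` are
orthogonal (in the metric `⟨ξ_X S, φ_X⟩_F + ⟨ξ_Y S⁻¹, φ_Y⟩_F`) to every vertical
direction `(XU, −YUᵀ)`. -/
theorem update_orthogonal_to_vertical (m n r : ℕ) (η : ℝ)
    (X : Matrix (Fin m) (Fin r) ℝ) (Y : Matrix (Fin n) (Fin r) ℝ)
    (GW : Matrix (Fin m) (Fin n) ℝ)
    (S : Matrix (Fin r) (Fin r) ℝ) (hS : S.PosDef) :
    ∀ U : Matrix (Fin r) (Fin r) ℝ,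
      ((X * U * S)ᵀ * (-η • (GW * Y * S⁻¹))).trace
        + ((-(Y * Uᵀ) * S⁻¹)ᵀ * (-η • (GWᵀ * X * S))).trace = 0 := by
  intro U
  have hSt : Sᵀ = S := by
    have := hS.isHermitian.eq
    simpa using this
  have hSit : (S⁻¹)ᵀ = S⁻¹ := by
    rw [transpose_nonsing_inv, hSt]
  have hinv : S⁻¹ * S = 1 := nonsing_inv_mul S (isUnit_iff_ne_zero.mpr hS.det_pos.ne')
  have hinv' : S * S⁻¹ = 1 := mul_nonsing_inv S (isUnit_iff_ne_zero.mpr hS.det_pos.ne')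
  have h1 : ((X * U * S)ᵀ * (-η • (GW * Y * S⁻¹))).trace
      = -η * (Uᵀ * Xᵀ * GW * Y).trace := by
    rw [Matrix.mul_smul, trace_smul, smul_eq_mul]
    congr 1
    rw [transpose_mul, transpose_mul, hSt, Matrix.mul_assoc, trace_mul_comm S]
    rw [show Uᵀ * Xᵀ * (GW * Y * S⁻¹) * S = Uᵀ * Xᵀ * (GW * Y) * (S⁻¹ * S) by
      simp only [Matrix.mul_assoc], hinv, Matrix.mul_one]
    simp only [Matrix.mul_assoc]
  have h2 : ((-(Y * Uᵀ) * S⁻¹)ᵀ * (-η • (GWᵀ * X * S))).trace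
      = η * (Uᵀ * Xᵀ * GW * Y).trace := by
    rw [Matrix.mul_smul, trace_smul, smul_eq_mul]
    rw [transpose_mul, transpose_neg, transpose_mul, transpose_transpose, hSit]
    simp only [Matrix.mul_neg, Matrix.neg_mul, trace_neg]
    rw [Matrix.mul_assoc, trace_mul_comm S⁻¹]
    rw [show U * Yᵀ * (GWᵀ * X * S) * S⁻¹ = U * Yᵀ * (GWᵀ * X) * (S * S⁻¹) by
      simp only [Matrix.mul_assoc], hinv', Matrix.mul_one]
    have htr : (U * Yᵀ * (GWᵀ * X)).trace = (Uᵀ * Xᵀ * GW * Y).trace := by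
      rw [← trace_transpose (U * Yᵀ * (GWᵀ * X))]
      simp only [transpose_mul, transpose_transpose]
      rw [trace_mul_comm]
      simp only [Matrix.mul_assoc]
      rw [trace_mul_comm Y]
      simp only [Matrix.mul_assoc]
    rw [htr]; ring
  rw [h1, h2]; ring
end
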